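/- For all real a with 2 ≤ a ≤ 3 and all real x ≥ t > 0, one has (x + t/(2a))^a ≤ x^a + t·x^(a-1) + (t²/(2a))·x^(a-2). -/

import Mathlib

theorem stmt_7 (a x t : ℝ) (ha2 : 2 ≤ a) (ha3 : a ≤ 3) (ht : 0 < t) (hxt : t ≤ x) :
    (x + t / (2 * a)) ^ a ≤ x ^ a + t * x ^ (a - 1) + t ^ 2 / (2 * a) * x ^ (a - 2) := by
  have hx : 0 < x := lt_of_lt_of_le ht hxt
  have ha : 0 < a := by linarith
  set u : ℝ := t / (2 * a * x) with hu
  have hu0 : 0 < u := by positivity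
  have hu1 : u ≤ 1 := by
    rw [hu, div_le_one (by positivity)]
    nlinarith
  have hfac : x + t / (2 * a) = x * (1 + u) := by
    rw [hu]; field_simp
  have h1 : (x * (1 + u)) ^ a = x ^ a * (1 + u) ^ a :=
    Real.mul_rpow hx.le (by positivity)
  have h2 : (1 + u) ^ a ≤ (1 + u) ^ (3 : ℝ) :=
    Real.rpow_le_rpow_of_exponent_le (by linarith) ha3
  have h3 : (1 + u) ^ (3 : ℝ) = (1 + u) ^ (3 : ℕ) := by
    rw [← Real.rpow_natCast]; norm_num
  have h4 : (1 + u) ^ (3 : ℕ) ≤ 1 + 2 * a * u + 2 * a * u ^ 2 := by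
    nlinarith [sq_nonneg u, hu0.le, hu1]
  have hxa : 0 < x ^ a := Real.rpow_pos_of_pos hx a
  have hrw1 : x ^ (a - 1) = x ^ a / x := by
    rw [Real.rpow_sub hx, Real.rpow_one]
  have hrw2 : x ^ (a - 2) = x ^ a / x ^ (2 : ℕ) := by
    rw [Real.rpow_sub hx, ← Real.rpow_natCast x 2]; norm_num
  have key : x ^ a * (1 + 2 * a * u + 2 * a * u ^ 2)
      = x ^ a + t * x ^ (a - 1) + t ^ 2 / (2 * a) * x ^ (a - 2) := by
    rw [hrw1, hrw2, hu]
    field_simp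
  calc (x + t / (2 * a)) ^ a = x ^ a * (1 + u) ^ a := by rw [hfac, h1]
    _ ≤ x ^ a * (1 + 2 * a * u + 2 * a * u ^ 2) := by
        apply mul_le_mul_of_nonneg_left _ hxa.le
        calc (1 + u) ^ a ≤ (1 + u) ^ (3 : ℝ) := h2
          _ = (1 + u) ^ (3 : ℕ) := h3
          _ ≤ _ := h4
    _ = _ := key
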